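/- arXiv:1204.1939 — 3 statements merged into one kernel-verified Lean document; each statement's English description precedes it below -/
import Mathlib

section
/- Let G be a finite graph of maximum degree Δ, let v be a vertex of G, and let s ≥ 1. Then the number of connected edge-induced subgraphs of G that contain v and have exactly s vertices is at most 2^{sΔ}. (An edge-induced subgraph is the subgraph determined by a nonempty set E′ of edges of G, whose vertex set is the set of endpoints of edges of E′.) -/
open scoped Classical

-- The vertex set of the edge-induced subgraph determined by a set `E'` of edges:
-- all endpoints of edges of `E'`.
def edgeVerts {V : Type*} (E' : Finset (Sym2 V)) : Set V := {x : V | ∃ e ∈ E', x ∈ e}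

-- `E'` determines a connected edge-induced subgraph: the graph with edge set `E'`,
-- restricted to the endpoints of edges of `E'`, is connected.
def EdgeInducedConnected {V : Type*} (E' : Finset (Sym2 V)) : Prop :=
  ((SimpleGraph.fromEdgeSet (E' : Set (Sym2 V))).induce (edgeVerts E')).Connected

section Aux
variable {V : Type*} [Fintype V] [DecidableEq V]

noncomputable def vertFinset (E' : Finset (Sym2 V)) : Finset V :=
  Finset.univ.filter (fun x => ∃ e ∈ E', x ∈ e)

lemma mem_vertFinset {E' : Finset (Sym2 V)} {x : V} :
    x ∈ vertFinset E' ↔ x ∈ edgeVerts E' := by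
  simp [vertFinset, edgeVerts]

lemma coe_vertFinset (E' : Finset (Sym2 V)) : (↑(vertFinset E') : Set V) = edgeVerts E' := by
  ext x; simpa using (mem_vertFinset (E' := E') (x := x))

noncomputable def cand (E' : Finset (Sym2 V)) (A : Finset V) : Finset V :=
  Finset.univ.filter (fun x => x ∉ A ∧ ∃ y ∈ A, s(x, y) ∈ E')

lemma mem_cand {E' : Finset (Sym2 V)} {A : Finset V} {x : V} :
    x ∈ cand E' A ↔ x ∉ A ∧ ∃ y ∈ A, s(x, y) ∈ E' := by
  simp [cand]

variable [LinearOrder V]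

noncomputable def bseq (E' : Finset (Sym2 V)) (v : V) : ℕ → Finset V
  | 0 => {v}
  | n + 1 =>
      if h : (cand E' (bseq E' v n)).Nonempty then
        insert ((cand E' (bseq E' v n)).min' h) (bseq E' v n)
      else bseq E' v n

noncomputable def bvtx (E' : Finset (Sym2 V)) (v : V) : ℕ → V
  | 0 => v
  | n + 1 =>
      if h : (cand E' (bseq E' v n)).Nonempty then (cand E' (bseq E' v n)).min' h else v

lemma bseq_zero (E' : Finset (Sym2 V)) (v : V) : bseq E' v 0 = {v} := rfl

lemma bseq_succ' (E' : Finset (Sym2 V)) (v : V) (n : ℕ) :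
    bseq E' v (n + 1) =
      if h : (cand E' (bseq E' v n)).Nonempty then
        insert ((cand E' (bseq E' v n)).min' h) (bseq E' v n)
      else bseq E' v n := rfl

lemma bvtx_zero (E' : Finset (Sym2 V)) (v : V) : bvtx E' v 0 = v := rfl

lemma bvtx_succ (E' : Finset (Sym2 V)) (v : V) (n : ℕ) :
    bvtx E' v (n + 1) =
      if h : (cand E' (bseq E' v n)).Nonempty then (cand E' (bseq E' v n)).min' h else v := rfl

lemma bseq_subset_succ (E' : Finset (Sym2 V)) (v : V) (n : ℕ) :
    bseq E' v n ⊆ bseq E' v (n + 1) := by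
  rw [bseq_succ']
  split
  · exact Finset.subset_insert _ _
  · exact Finset.Subset.refl _

lemma v_mem_bseq (E' : Finset (Sym2 V)) (v : V) (n : ℕ) : v ∈ bseq E' v n := by
  induction n with
  | zero => simp [bseq]
  | succ n ih => exact bseq_subset_succ E' v n ih

lemma bseq_succ_eq (E' : Finset (Sym2 V)) (v : V) (n : ℕ) :
    bseq E' v (n + 1) = insert (bvtx E' v (n + 1)) (bseq E' v n) := by
  rw [bseq_succ', bvtx_succ]
  by_cases h : (cand E' (bseq E' v n)).Nonempty
  · rw [dif_pos h, dif_pos h]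
  · rw [dif_neg h, dif_neg h, Finset.insert_eq_self.mpr (v_mem_bseq E' v n)]

lemma bseq_eq_image (E' : Finset (Sym2 V)) (v : V) (n : ℕ) :
    bseq E' v n = (Finset.range (n + 1)).image (bvtx E' v) := by
  induction n with
  | zero => simp [bseq_zero, bvtx_zero]
  | succ n ih =>
    rw [bseq_succ_eq, ih]
    conv_rhs => rw [Finset.range_add_one, Finset.image_insert]

lemma bseq_subset_verts {E' : Finset (Sym2 V)} {v : V} (hv : v ∈ edgeVerts E') (n : ℕ) :
    bseq E' v n ⊆ vertFinset E' := by
  induction n with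
  | zero =>
    intro x hx
    simp only [bseq, Finset.mem_singleton] at hx
    subst hx; exact mem_vertFinset.mpr hv
  | succ n ih =>
    rw [bseq_succ_eq]
    intro x hx
    rcases Finset.mem_insert.mp hx with h | h
    · subst h
      rw [bvtx_succ]
      by_cases hne : (cand E' (bseq E' v n)).Nonempty
      · rw [dif_pos hne]
        obtain ⟨-, y, -, hxy⟩ := mem_cand.mp (Finset.min'_mem _ hne)
        exact mem_vertFinset.mpr ⟨s(_, y), hxy, Sym2.mem_mk_left _ _⟩
      · rw [dif_neg hne]; exact mem_vertFinset.mpr hv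
    · exact ih h

lemma cand_nonempty {E' : Finset (Sym2 V)} (hconn : EdgeInducedConnected E')
    {A : Finset V} (ha : ∃ a ∈ A, a ∈ edgeVerts E') (hb : ∃ b ∈ edgeVerts E', b ∉ A) :
    (cand E' A).Nonempty := by
  obtain ⟨a, haA, haS⟩ := ha
  obtain ⟨b, hbS, hbA⟩ := hb
  obtain ⟨p⟩ := hconn.preconnected ⟨a, haS⟩ ⟨b, hbS⟩
  obtain ⟨d, -, hdf, hds⟩ := p.exists_boundary_dart {w | (w : V) ∈ A} haA hbA
  refine ⟨(d.snd : V), mem_cand.mpr ⟨hds, (d.fst : V), hdf, ?_⟩⟩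
  have hadj := d.adj
  simp only [SimpleGraph.comap_adj, SimpleGraph.fromEdgeSet_adj, Finset.mem_coe] at hadj
  rw [Sym2.eq_swap]
  exact hadj.1

lemma min_le_card_bseq {E' : Finset (Sym2 V)} {v : V} (hv : v ∈ edgeVerts E')
    (hconn : EdgeInducedConnected E') (n : ℕ) :
    min (n + 1) ((vertFinset E').card) ≤ (bseq E' v n).card := by
  induction n with
  | zero =>
    simp [bseq_zero]
  | succ n ih =>
    by_cases h : bseq E' v n = vertFinset E'
    · have h1 : (vertFinset E').card ≤ (bseq E' v (n+1)).card := by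
        rw [← h]; exact Finset.card_le_card (bseq_subset_succ E' v n)
      omega
    · have hsub := bseq_subset_verts hv n
      obtain ⟨b, hbS, hbA⟩ := Finset.exists_of_ssubset (hsub.ssubset_of_ne h)
      have hcne : (cand E' (bseq E' v n)).Nonempty :=
        cand_nonempty hconn ⟨v, v_mem_bseq E' v n, hv⟩ ⟨b, mem_vertFinset.mp hbS, hbA⟩
      have hnotmem : bvtx E' v (n+1) ∉ bseq E' v n := by
        rw [bvtx_succ, dif_pos hcne]
        exact (mem_cand.mp (Finset.min'_mem _ hcne)).1
      rw [bseq_succ_eq, Finset.card_insert_of_notMem hnotmem]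
      omega

lemma bseq_eq_verts {E' : Finset (Sym2 V)} {v : V} {s : ℕ} (hv : v ∈ edgeVerts E')
    (hconn : EdgeInducedConnected E') (hs : 1 ≤ s) (hcard : (vertFinset E').card = s) :
    bseq E' v (s - 1) = vertFinset E' := by
  apply Finset.eq_of_subset_of_card_le (bseq_subset_verts hv _)
  have := min_le_card_bseq hv hconn (s - 1)
  omega

lemma image_injOn_eq {α β : Type*} [DecidableEq α] [DecidableEq β] {f : α → β} {s : Set α}
    (hf : Set.InjOn f s) {t1 t2 : Finset α} (h1 : ↑t1 ⊆ s) (h2 : ↑t2 ⊆ s)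
    (h : t1.image f = t2.image f) : t1 = t2 := by
  ext a
  constructor <;> intro ha
  · have : f a ∈ t2.image f := h ▸ Finset.mem_image_of_mem f ha
    obtain ⟨b, hb, hba⟩ := Finset.mem_image.mp this
    rwa [hf (h2 hb) (h1 ha) hba] at hb
  · have : f a ∈ t1.image f := h ▸ Finset.mem_image_of_mem f ha
    obtain ⟨b, hb, hba⟩ := Finset.mem_image.mp this
    rwa [hf (h1 hb) (h2 ha) hba] at hb

end Aux

/-- In a finite graph `G` of maximum degree `Δ`, for every vertex `v` and
every `s ≥ 1`, the number of connected edge-induced subgraphs of `G` containing `v` and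
having exactly `s` vertices is at most `2^(s·Δ)`. -/
theorem stmt6 {V : Type*} [Fintype V] [DecidableEq V] (G : SimpleGraph V) (Δ : ℕ)
    (hΔ : ∀ x : V, (G.neighborSet x).ncard ≤ Δ) (v : V) (s : ℕ) (hs : 1 ≤ s) :
    Set.ncard {E' : Finset (Sym2 V) | (E' : Set (Sym2 V)) ⊆ G.edgeSet ∧ E'.Nonempty ∧
        v ∈ edgeVerts E' ∧ (edgeVerts E').ncard = s ∧ EdgeInducedConnected E'} ≤
      2 ^ (s * Δ) := by
  letI : LinearOrder V := LinearOrder.lift' (Fintype.equivFin V) (Fintype.equivFin V).injective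
  set T := {E' : Finset (Sym2 V) | (E' : Set (Sym2 V)) ⊆ G.edgeSet ∧ E'.Nonempty ∧
      v ∈ edgeVerts E' ∧ (edgeVerts E').ncard = s ∧ EdgeInducedConnected E'} with hT
  rcases Nat.eq_zero_or_pos Δ with hΔ0 | hΔpos
  · subst hΔ0
    have hTe : T = ∅ := by
      ext E'
      simp only [hT, Set.mem_setOf_eq, Set.mem_empty_iff_false, iff_false, not_and]
      rintro hE ⟨e, he⟩
      exfalso
      revert he
      induction e using Sym2.ind with
      | _ a b =>
        intro he
        have hadj : G.Adj a b := (SimpleGraph.mem_edgeSet G).mp (hE he)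
        have : 0 < (G.neighborSet a).ncard :=
          (Set.ncard_pos (Set.toFinite _)).mpr ⟨b, hadj⟩
        have := hΔ a
        omega
    rw [hTe]
    simp
  · -- choose labellings of incident edges
    have hι : ∀ u : V, ∃ f : Sym2 V → Fin Δ, Set.InjOn f (G.incidenceSet u) := by
      intro u
      have hcard : Fintype.card (G.incidenceSet u) ≤ Δ := by
        have h1 : Fintype.card (G.incidenceSet u) = Fintype.card (G.neighborSet u) :=
          Fintype.card_congr (G.incidenceSetEquivNeighborSet u)
        have h2 : (G.neighborSet u).ncard = Fintype.card (G.neighborSet u) := by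
          rw [← Nat.card_coe_set_eq, Nat.card_eq_fintype_card]
        have := hΔ u
        omega
      obtain ⟨emb⟩ : Nonempty (G.incidenceSet u ↪ Fin Δ) :=
        Function.Embedding.nonempty_of_card_le (by simpa using hcard)
      refine ⟨fun e => if h : e ∈ G.incidenceSet u then emb ⟨e, h⟩ else ⟨0, hΔpos⟩, ?_⟩
      intro a ha b hb hab
      simp only [dif_pos ha, dif_pos hb] at hab
      exact congrArg Subtype.val (emb.injective hab)
    choose ι hι using hι
    set Ψ : Finset (Sym2 V) → (Fin s → Finset (Fin Δ)) :=
      fun E' i => (E'.filter (fun e => bvtx E' v i ∈ e)).image (ι (bvtx E' v i)) with hΨdef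
    have key : Set.InjOn Ψ T := by
      rintro E1 ⟨hE1, hne1, hv1, hc1, hconn1⟩ E2 ⟨hE2, hne2, hv2, hc2, hconn2⟩ hΨ
      have hs1 : (vertFinset E1).card = s := by
        rw [← Set.ncard_coe_finset, coe_vertFinset]; exact hc1
      have hs2 : (vertFinset E2).card = s := by
        rw [← Set.ncard_coe_finset, coe_vertFinset]; exact hc2
      have hedge : ∀ i : ℕ, ∀ hi : i < s, bvtx E1 v i = bvtx E2 v i →
          E1.filter (fun e => bvtx E1 v i ∈ e) = E2.filter (fun e => bvtx E1 v i ∈ e) := by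
        intro i hi hvv
        have h := congrFun hΨ ⟨i, hi⟩
        simp only [hΨdef] at h
        rw [← hvv] at h
        refine image_injOn_eq (hι (bvtx E1 v i)) ?_ ?_ h
        · intro e he
          simp only [Finset.coe_filter, Set.mem_setOf_eq] at he
          exact ⟨hE1 he.1, he.2⟩
        · intro e he
          simp only [Finset.coe_filter, Set.mem_setOf_eq] at he
          exact ⟨hE2 he.1, he.2⟩
      have hvtx : ∀ n : ℕ, n < s → ∀ i ≤ n, bvtx E1 v i = bvtx E2 v i := by
        intro n
        induction n with
        | zero =>
          intro _ i hi
          have : i = 0 := by omega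
          subst this; rfl
        | succ n ih =>
          intro hn i hi
          have ihall : ∀ j ≤ n, bvtx E1 v j = bvtx E2 v j := ih (by omega)
          rcases Nat.lt_or_ge i (n + 1) with h | h
          · exact ihall i (by omega)
          · have hieq : i = n + 1 := by omega
            subst hieq
            have hseq : bseq E1 v n = bseq E2 v n := by
              rw [bseq_eq_image, bseq_eq_image]
              apply Finset.image_congr
              intro j hj
              have hj' : j < n + 1 := by simpa using hj
              exact ihall j (by omega)
            have hcand : cand E1 (bseq E1 v n) = cand E2 (bseq E1 v n) := by
              ext x
              simp only [mem_cand]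
              constructor
              · rintro ⟨hx, y, hy, hxy⟩
                refine ⟨hx, y, hy, ?_⟩
                rw [bseq_eq_image] at hy
                obtain ⟨j, hj, rfl⟩ := Finset.mem_image.mp hy
                have hjn : j ≤ n := by
                  have := Finset.mem_range.mp hj; omega
                have hjs : j < s := by omega
                have hfe := hedge j hjs (ihall j hjn)
                have : s(x, bvtx E1 v j) ∈ E1.filter (fun e => bvtx E1 v j ∈ e) :=
                  Finset.mem_filter.mpr ⟨hxy, Sym2.mem_mk_right _ _⟩
                rw [hfe] at this
                exact (Finset.mem_filter.mp this).1
              · rintro ⟨hx, y, hy, hxy⟩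
                refine ⟨hx, y, hy, ?_⟩
                rw [bseq_eq_image] at hy
                obtain ⟨j, hj, rfl⟩ := Finset.mem_image.mp hy
                have hjn : j ≤ n := by
                  have := Finset.mem_range.mp hj; omega
                have hjs : j < s := by omega
                have hfe := hedge j hjs (ihall j hjn)
                have : s(x, bvtx E1 v j) ∈ E2.filter (fun e => bvtx E1 v j ∈ e) :=
                  Finset.mem_filter.mpr ⟨hxy, Sym2.mem_mk_right _ _⟩
                rw [← hfe] at this
                exact (Finset.mem_filter.mp this).1
            rw [bvtx_succ, bvtx_succ, ← hseq, ← hcand]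
      have hvtxall : ∀ j, j < s → bvtx E1 v j = bvtx E2 v j :=
        fun j hj => hvtx (s - 1) (by omega) j (by omega)
      have hverts1 : bseq E1 v (s - 1) = vertFinset E1 := bseq_eq_verts hv1 hconn1 hs hs1
      have hverts2 : bseq E2 v (s - 1) = vertFinset E2 := bseq_eq_verts hv2 hconn2 hs hs2
      ext e
      constructor
      · intro he
        have ha : e.out.1 ∈ e := Sym2.out_fst_mem e
        have haS : e.out.1 ∈ vertFinset E1 := mem_vertFinset.mpr ⟨e, he, ha⟩
        rw [← hverts1, bseq_eq_image] at haS
        obtain ⟨j, hj, hje⟩ := Finset.mem_image.mp haS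
        have hjs : j < s := by
          have := Finset.mem_range.mp hj; omega
        have hfe := hedge j hjs (hvtxall j hjs)
        have : e ∈ E1.filter (fun e' => bvtx E1 v j ∈ e') :=
          Finset.mem_filter.mpr ⟨he, by rw [hje]; exact ha⟩
        rw [hfe] at this
        exact (Finset.mem_filter.mp this).1
      · intro he
        have ha : e.out.1 ∈ e := Sym2.out_fst_mem e
        have haS : e.out.1 ∈ vertFinset E2 := mem_vertFinset.mpr ⟨e, he, ha⟩
        rw [← hverts2, bseq_eq_image] at haS
        obtain ⟨j, hj, hje⟩ := Finset.mem_image.mp haS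
        have hjs : j < s := by
          have := Finset.mem_range.mp hj; omega
        have hfe := hedge j hjs (hvtxall j hjs)
        have : e ∈ E2.filter (fun e' => bvtx E1 v j ∈ e') :=
          Finset.mem_filter.mpr ⟨he, by rw [hvtxall j hjs, hje]; exact ha⟩
        rw [← hfe] at this
        exact (Finset.mem_filter.mp this).1
    calc T.ncard ≤ (Set.univ : Set (Fin s → Finset (Fin Δ))).ncard :=
          Set.ncard_le_ncard_of_injOn Ψ (fun a _ => Set.mem_univ _) key Set.finite_univ
      _ = 2 ^ (s * Δ) := by
          rw [Set.ncard_univ, Nat.card_eq_fintype_card, Fintype.card_fun]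
          simp [Fintype.card_finset, ← pow_mul, mul_comm]
end

section
/- Let G be a finite graph in which every vertex has even degree, and let W be a trail in G (a walk that traverses no edge more than once) starting at a vertex v. Suppose W is maximal in the sense that every edge of G incident with the final vertex of W is traversed by W. Then the final vertex of W equals v, i.e., every maximal trail in an even-degree graph returns to its starting vertex. -/
/-- In a finite graph in which every vertex has even degree, every maximal
trail returns to its starting vertex: if `W` is a trail from `v` to `w` and every edge of `G`
incident with `w` is traversed by `W`, then `w = v`. -/
theorem stmt9 {V : Type*} [Fintype V] (G : SimpleGraph V) [DecidableRel G.Adj]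
    (heven : ∀ x : V, Even (G.degree x)) {v w : V} (W : G.Walk v w)
    (htrail : W.IsTrail) (hmax : ∀ x : V, G.Adj w x → s(w, x) ∈ W.edges) :
    w = v := by
  classical
  by_contra hne
  have hkey : ¬ Even (W.edges.countP fun e => decide (w ∈ e)) := by
    rw [htrail.even_countP_edges_iff w]
    intro h
    exact absurd rfl (h (Ne.symm hne)).2
  apply hkey
  have hcount : (W.edges.countP fun e => decide (w ∈ e)) = G.degree w := by
    rw [← SimpleGraph.card_incidenceFinset_eq_degree]
    rw [List.countP_eq_length_filter]
    have hnd : (W.edges.filter fun e => decide (w ∈ e)).Nodup :=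
      htrail.edges_nodup.filter _
    rw [← List.toFinset_card_of_nodup hnd]
    congr 1
    ext e
    simp only [List.mem_toFinset, List.mem_filter, SimpleGraph.mem_incidenceFinset,
      SimpleGraph.incidenceSet]
    constructor
    · rintro ⟨he, hwe⟩
      exact ⟨W.edges_subset_edgeSet he, by simpa using hwe⟩
    · rintro ⟨he, hwe⟩
      refine ⟨?_, by simpa using hwe⟩
      induction e with
      | h a b =>
        rw [Sym2.mem_iff] at hwe
        rw [SimpleGraph.mem_edgeSet] at he
        rcases hwe with rfl | rfl
        · exact hmax b he
        · rw [Sym2.eq_swap]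
          exact hmax a he.symm
  rw [hcount]
  exact heven w
end

section
/- Let G be a finite graph in which every vertex has even degree, let v be a vertex of G of degree at least 4, and let s ≥ 1. Suppose that every set U of at most s vertices of G induces at most |U| edges. Then every nonempty subgraph of G in which every vertex has even degree and which contains all edges of G incident with v has more than s vertices; in particular, v is (s+1)-good. -/
open scoped Classical

/-- Let `G` be a finite graph in which every vertex has even degree, let
`v` be a vertex of degree at least `4`, and suppose every set `U` of at most `s` vertices
induces at most `|U|` edges. Then every nonempty subgraph of `G` in which every vertex has
even degree and which contains all edges of `G` incident with `v` has more than `s`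
vertices; in particular `v` is `(s+1)`-good. -/
theorem stmt13 {V : Type*} [Fintype V] [DecidableEq V] (G : SimpleGraph V)
    [DecidableRel G.Adj]
    (heven : ∀ x : V, Even (G.degree x)) (v : V) (hv : 4 ≤ G.degree v)
    (s : ℕ) (hs : 1 ≤ s)
    (hind : ∀ U : Finset V, U.card ≤ s →
      Set.ncard {e : Sym2 V | e ∈ G.edgeSet ∧ ∀ x ∈ e, x ∈ U} ≤ U.card) :
    ∀ H : G.Subgraph, H.verts.Nonempty →
      (∀ e ∈ G.edgeSet, v ∈ e → e ∈ H.edgeSet) →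
      (∀ x : V, Even ((H.neighborSet x).ncard)) →
      s < H.verts.ncard := by
  classical
  intro H hne hall hevenH
  set G' := H.spanningCoe with hG'
  have hGadj : ∀ x y, G'.Adj x y ↔ H.Adj x y := fun x y => Iff.rfl
  have hns : ∀ x, G'.neighborSet x = H.neighborSet x := fun x => rfl
  have hdeg : ∀ x, G'.degree x = (H.neighborSet x).ncard := by
    intro x
    rw [← hns, ← SimpleGraph.card_neighborSet_eq_degree, Set.ncard_eq_toFinset_card']
    simp [Set.toFinset_card]
  -- W : vertices of positive H-degree
  set W : Finset V := Finset.univ.filter (fun x => G'.degree x ≠ 0) with hW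
  have hWverts : (W : Set V) ⊆ H.verts := by
    intro x hx
    simp only [hW, Finset.coe_filter, Set.mem_setOf_eq, Finset.mem_univ, true_and] at hx
    rw [hdeg] at hx
    have : (H.neighborSet x).Nonempty := Set.nonempty_of_ncard_ne_zero hx
    obtain ⟨y, hy⟩ := this
    exact H.edge_vert hy
  -- v has H-degree ≥ 4
  have hvdeg : 4 ≤ G'.degree v := by
    have hsub : G.neighborSet v ⊆ H.neighborSet v := by
      intro y hy
      have : s(v, y) ∈ H.edgeSet := hall _ hy (by simp)
      exact this
    calc (4 : ℕ) ≤ G.degree v := hv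
      _ = (G.neighborSet v).ncard := by
          rw [← SimpleGraph.card_neighborSet_eq_degree, Set.ncard_eq_toFinset_card']
          simp [Set.toFinset_card]
      _ ≤ (H.neighborSet v).ncard := Set.ncard_le_ncard hsub (Set.toFinite _)
      _ = G'.degree v := (hdeg v).symm
  have hvW : v ∈ W := by
    simp only [hW, Finset.mem_filter, Finset.mem_univ, true_and]
    omega
  -- lower bound on sum of degrees
  have hlow : 2 * W.card + 2 ≤ ∑ x ∈ W, G'.degree x := by
    have herase : ∀ x ∈ W.erase v, 2 ≤ G'.degree x := by
      intro x hx
      have hx' := Finset.mem_of_mem_erase hx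
      simp only [hW, Finset.mem_filter, Finset.mem_univ, true_and] at hx'
      have he : Even (G'.degree x) := by rw [hdeg]; exact hevenH x
      obtain ⟨k, hk⟩ := he
      omega
    have h1 : ∑ x ∈ W.erase v, G'.degree x + G'.degree v = ∑ x ∈ W, G'.degree x :=
      Finset.sum_erase_add _ _ hvW
    have h2 : 2 * (W.erase v).card ≤ ∑ x ∈ W.erase v, G'.degree x := by
      calc 2 * (W.erase v).card = ∑ _x ∈ W.erase v, 2 := by
            rw [Finset.sum_const, smul_eq_mul, mul_comm]
        _ ≤ _ := Finset.sum_le_sum herase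
    have h3 : (W.erase v).card = W.card - 1 := Finset.card_erase_of_mem hvW
    have h4 : 1 ≤ W.card := Finset.card_pos.mpr ⟨v, hvW⟩
    omega
  -- sum of degrees over W = sum over univ = 2 * #edges
  have hsum : ∑ x ∈ W, G'.degree x = 2 * G'.edgeFinset.card := by
    rw [← SimpleGraph.sum_degrees_eq_twice_card_edges]
    apply Finset.sum_subset (Finset.subset_univ _)
    intro x _ hx
    simp only [hW, Finset.mem_filter, Finset.mem_univ, true_and, not_not] at hx
    exact hx
  -- edges of G' are G-edges induced by W
  have hedges : G'.edgeSet ⊆ {e : Sym2 V | e ∈ G.edgeSet ∧ ∀ x ∈ e, x ∈ W} := by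
    intro e he
    induction e with
    | h x y =>
      rw [SimpleGraph.mem_edgeSet] at he
      have hadj : H.Adj x y := he
      refine ⟨hadj.adj_sub, ?_⟩
      intro z hz
      simp only [Sym2.mem_iff] at hz
      have hmem : ∀ a b : V, H.Adj a b → a ∈ W := by
        intro a b hab
        simp only [hW, Finset.mem_filter, Finset.mem_univ, true_and, hdeg]
        have : b ∈ H.neighborSet a := hab
        have := Set.ncard_pos (Set.toFinite (H.neighborSet a)) |>.mpr ⟨b, this⟩
        omega
      rcases hz with rfl | rfl
      · exact hmem _ _ hadj
      · exact hmem _ _ hadj.symm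
  -- main contradiction: suppose W.card ≤ s
  by_contra hcon
  push_neg at hcon
  have hWcard : W.card ≤ s := by
    have : (W : Set V).ncard ≤ H.verts.ncard := Set.ncard_le_ncard hWverts (Set.toFinite _)
    rw [Set.ncard_coe_finset] at this
    omega
  have hbound := hind W hWcard
  have hE : G'.edgeFinset.card ≤ W.card := by
    calc G'.edgeFinset.card = G'.edgeSet.ncard := by
          rw [Set.ncard_eq_toFinset_card']
          congr 1
      _ ≤ Set.ncard {e : Sym2 V | e ∈ G.edgeSet ∧ ∀ x ∈ e, x ∈ W} :=
          Set.ncard_le_ncard hedges (Set.toFinite _)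
      _ ≤ W.card := hbound
  omega
end
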